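/- Let G be a topological group and let ℋ be a family of closed subgroups of G, each codistal in G. Then the intersection H = ⋂_{K ∈ ℋ} K is codistal in G. -/

import Mathlib

open Topology

/-- A subgroup `K` of a topological group `G` is codistal if the left translation action of
`G` on `G/K` is distal: no pair of distinct cosets is proximal. -/
def Codistal {G : Type*} [Group G] [TopologicalSpace G] (K : Subgroup G) : Prop :=
  ∀ x y : G, (QuotientGroup.mk x : G ⧸ K) ≠ QuotientGroup.mk y →
    ¬ ∃ z : G ⧸ K, (z, z) ∈ closure {p : (G ⧸ K) × (G ⧸ K) |
      ∃ g : G, p = (QuotientGroup.mk (g * x), QuotientGroup.mk (g * y))}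

/-- The intersection of any family of closed codistal subgroups of a topological group is
codistal. -/
theorem codistal_sInf {G : Type*} [Group G] [TopologicalSpace G] [IsTopologicalGroup G]
    (ℋ : Set (Subgroup G)) (hclosed : ∀ K ∈ ℋ, IsClosed (K : Set G))
    (hcd : ∀ K ∈ ℋ, Codistal K) : Codistal (sInf ℋ) := by
  intro x y hxy ⟨z, hz⟩
  -- find K ∈ ℋ separating x and y
  have hmem : x⁻¹ * y ∉ sInf ℋ := fun h => hxy (QuotientGroup.eq.mpr h)
  obtain ⟨K, hK, hxyK⟩ : ∃ K ∈ ℋ, x⁻¹ * y ∉ K := by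
    by_contra h
    push_neg at h
    exact hmem (Subgroup.mem_sInf.mpr h)
  have hle : sInf ℋ ≤ K := sInf_le hK
  -- the natural map G ⧸ sInf ℋ → G ⧸ K
  let f : G ⧸ sInf ℋ → G ⧸ K := fun q =>
    Quotient.liftOn' q QuotientGroup.mk (fun a b h =>
      QuotientGroup.eq.mpr (hle (QuotientGroup.leftRel_apply.mp h)))
  have hfmk : ∀ g : G, f (QuotientGroup.mk g) = QuotientGroup.mk g := fun g => rfl
  have hfcont : Continuous f := by
    rw [(QuotientGroup.isQuotientMap_mk (sInf ℋ)).continuous_iff]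
    exact continuous_quot_mk
  have hfne : (QuotientGroup.mk x : G ⧸ K) ≠ QuotientGroup.mk y :=
    fun h => hxyK (QuotientGroup.eq.mp h)
  refine hcd K hK x y hfne ⟨f z, ?_⟩
  have := (image_closure_subset_closure_image (hfcont.prodMap hfcont))
    (Set.mem_image_of_mem _ hz)
  refine closure_mono ?_ this
  rintro p ⟨q, ⟨g, rfl⟩, rfl⟩
  exact ⟨g, by simp [Prod.map, hfmk]⟩
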